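/- arXiv:0803.2004 — 3 statements merged into one kernel-verified Lean document; each statement's English description precedes it below -/
import Mathlib

section
/- Let ω ∈ X^{n-1}_p(Λ) and let α₁,…,α_k (k ≤ n) be the points of Λ in a disk D_λ of the covering. Then the Newton interpolation polynomial P_λ(z) = Δ⁰ω(α₁) + Δ¹ω(α₁,α₂)(z−α₁) + ⋯ + Δ^{k-1}ω(α₁,…,α_k)∏_{j=1}^{k-1}(z−α_j) satisfies P_λ(α_i) = ω(α_i) for all i and the growth bound |P_λ(z)| ≤ A e^{B'(p(z)+p(λ))} for all z ∈ ℂ, for constants A, B' independent of λ. -/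
open Complex Metric Set

noncomputable def divDiff : (k : ℕ) → (ℂ → ℂ) → (Fin (k+1) → ℂ) → ℂ
  | 0, ω, z => ω (z 0)
  | k+1, ω, z =>
      (divDiff k ω (fun i => z i.succ) - divDiff k ω (fun i => z i.castSucc)) /
        (z (Fin.last (k+1)) - z 0)

/-- `p` is a weight on `ℂ`: nonnegative, `p(z) ≥ K log(1+|z|²)` for some `K > 0`,
and `p(z) ≤ D₀ p(w) + E₀` whenever `|z-w| ≤ 1`. -/
def IsWeight (p : ℂ → ℝ) : Prop :=
  (∀ z, 0 ≤ p z) ∧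
  (∃ K > 0, ∀ z : ℂ, K * Real.log (1 + ‖z‖ ^ 2) ≤ p z) ∧
  (∃ D > 0, ∃ E > 0, ∀ z w : ℂ, ‖z - w‖ ≤ 1 → p z ≤ D * p w + E)

/-- `ω ∈ X^k_p(Λ)`: the divided differences of order `k` (on `k+1` distinct points of `Λ`)
are uniformly bounded with respect to the weight `p`. -/
def MemX (p : ℂ → ℝ) (Λ : Set ℂ) (k : ℕ) (ω : ℂ → ℂ) : Prop :=
  ∃ A > 0, ∃ B > 0, ∀ z : Fin (k+1) → ℂ, (∀ i, z i ∈ Λ) → Function.Injective z →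
    ‖divDiff k ω z‖ ≤ A * Real.exp (B * ∑ i, p (z i))

/-- `f ∈ A_p`: `f` is entire with `|f(z)| ≤ A e^{B p(z)}` for some `A, B > 0`. -/
def MemAp (p : ℂ → ℝ) (f : ℂ → ℂ) : Prop :=
  Differentiable ℂ f ∧ ∃ A > 0, ∃ B > 0, ∀ z, ‖f z‖ ≤ A * Real.exp (B * p z)

/-- `Λ` is interpolating for `A_p`. -/
def Interpolating (p : ℂ → ℝ) (Λ : Set ℂ) : Prop :=
  ∀ ω : ℂ → ℂ, (∃ A > 0, ∃ B > 0, ∀ l ∈ Λ, ‖ω l‖ ≤ A * Real.exp (B * p l)) →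
    ∃ f, MemAp p f ∧ ∀ l ∈ Λ, f l = ω l

/-- Uniform interpolation bounds (Lemma 2.2.6 of Berenstein–Gay). -/
def UnifInterp (p : ℂ → ℝ) (Λ : Set ℂ) : Prop :=
  ∀ A > 0, ∀ B > 0, ∃ A' > 0, ∃ B' > 0, ∀ ω : ℂ → ℂ,
    (∀ l ∈ Λ, ‖ω l‖ ≤ A * Real.exp (B * p l)) →
    ∃ f, Differentiable ℂ f ∧ (∀ z, ‖f z‖ ≤ A' * Real.exp (B' * p z)) ∧
      ∀ l ∈ Λ, f l = ω l

/-- `Λ` is weakly separated: the disks `D(l, ε e^{-C p l})` are pairwise disjoint. -/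
def WeaklySeparated (p : ℂ → ℝ) (Λ : Set ℂ) : Prop :=
  ∃ ε > 0, ∃ C > 0, ∀ l ∈ Λ, ∀ m ∈ Λ, l ≠ m →
    Disjoint (ball l (ε * Real.exp (-C * p l))) (ball m (ε * Real.exp (-C * p m)))

/-- `Λ` has no accumulation points in `ℂ`. -/
def DiscreteSet (Λ : Set ℂ) : Prop := ∀ z : ℂ, ¬ AccPt z (Filter.principal Λ)

/-- Newton interpolation polynomial built from divided differences:
`P(z) = Δ⁰ω(α₁) + Δ¹ω(α₁,α₂)(z-α₁) + ⋯ + Δ^{k-1}ω(α₁,…,α_k)∏_{j<k-1}(z-α_j)`. -/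
noncomputable def newtonPoly (ω : ℂ → ℂ) {k : ℕ} (α : Fin k → ℂ) (z : ℂ) : ℂ :=
  ∑ i : Fin k,
    divDiff (i : ℕ) ω (fun j : Fin ((i : ℕ) + 1) => α (Fin.castLE i.isLt j)) *
      ∏ j : Fin (i : ℕ), (z - α ⟨(j : ℕ), j.isLt.trans i.isLt⟩)

lemma map_univ_succAbove (p : Fin (n+1)) :
    (Finset.univ.map (Fin.succAboveEmb p)) = Finset.univ.erase p := by
  ext j
  simp [Fin.succAboveEmb, Fin.exists_succAbove_eq_iff]

lemma lemA (m : ℕ) (ω : ℂ → ℂ)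
    (hsum : ∀ v : Fin (m+1) → ℂ, Function.Injective v →
      divDiff m ω v = ∑ i, ω (v i) * (∏ j ∈ Finset.univ.erase i, (v i - v j))⁻¹)
    (w : Fin (m+2) → ℂ) (hw : Function.Injective w) (p : Fin (m+2)) :
    divDiff m ω (w ∘ p.succAbove) =
      ∑ i : Fin (m+2), ω (w i) * ((w i - w p) *
        (∏ j ∈ Finset.univ.erase i, (w i - w j))⁻¹) := by
  rw [hsum _ (hw.comp (Fin.succAbove_right_injective))]
  rw [Fin.sum_univ_succAbove
    (fun i => ω (w i) * ((w i - w p) * (∏ j ∈ Finset.univ.erase i, (w i - w j))⁻¹)) p]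
  simp only [sub_self, zero_mul, mul_zero, zero_add]
  refine Finset.sum_congr rfl fun i _ => ?_
  have hne : p.succAbove i ≠ p := Fin.succAbove_ne p i
  have key : ∏ j ∈ Finset.univ.erase i, (w (p.succAbove i) - w (p.succAbove j)) =
      ∏ j ∈ (Finset.univ.erase p).erase (p.succAbove i), (w (p.succAbove i) - w j) := by
    rw [← map_univ_succAbove p, show p.succAbove i = Fin.succAboveEmb p i from rfl,
      ← Finset.map_erase, Finset.prod_map]
    rfl
  simp only [Function.comp_apply]
  rw [key]
  have hmem : p ∈ Finset.univ.erase (p.succAbove i) := by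
    simp [Ne.symm hne]
  have hcomm : (Finset.univ.erase (p.succAbove i)).erase p
      = (Finset.univ.erase p).erase (p.succAbove i) := by
    ext x; simp; tauto
  rw [← Finset.mul_prod_erase _ _ hmem, hcomm]
  have hzero : w (p.succAbove i) - w p ≠ 0 := sub_ne_zero.mpr (fun h => hne (hw h))
  congr 1
  rw [mul_inv, ← mul_assoc, mul_inv_cancel₀ hzero, one_mul]

lemma divDiff_sum (ω : ℂ → ℂ) : ∀ (m : ℕ) (w : Fin (m+1) → ℂ), Function.Injective w →
    divDiff m ω w = ∑ i, ω (w i) * (∏ j ∈ Finset.univ.erase i, (w i - w j))⁻¹ := by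
  intro m
  induction m with
  | zero =>
    intro w _
    simp [divDiff]
  | succ m ih =>
    intro w hw
    have h0 : (fun i : Fin (m+1) => w i.succ) = w ∘ (0 : Fin (m+2)).succAbove := by
      funext i; simp
    have h1 : (fun i : Fin (m+1) => w i.castSucc) = w ∘ (Fin.last (m+1)).succAbove := by
      funext i; simp
    have hlast0 : w (Fin.last (m+1)) - w 0 ≠ 0 := by
      refine sub_ne_zero.mpr (fun h => ?_)
      have := hw h
      simp [Fin.ext_iff] at this
    show (divDiff m ω (fun i => w i.succ) - divDiff m ω (fun i => w i.castSucc)) /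
        (w (Fin.last (m+1)) - w 0) = _
    rw [h0, h1, lemA m ω (ih) w hw 0, lemA m ω (ih) w hw (Fin.last (m+1)),
      div_eq_iff hlast0, ← Finset.sum_sub_distrib, Finset.sum_mul]
    refine Finset.sum_congr rfl fun i _ => ?_
    ring

lemma rec2 (k : ℕ) (ω : ℂ → ℂ) (u : Fin (k+2) → ℂ) (hu : Function.Injective u) :
    divDiff k ω (u ∘ (⟨k, by omega⟩ : Fin (k+2)).succAbove) - divDiff k ω (u ∘ Fin.castSucc)
      = (u (Fin.last (k+1)) - u ⟨k, by omega⟩) * divDiff (k+1) ω u := by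
  have h1 : (u ∘ Fin.castSucc : Fin (k+1) → ℂ) = u ∘ (Fin.last (k+1)).succAbove := by
    funext i; simp
  rw [h1, lemA k ω (divDiff_sum ω k) u hu ⟨k, by omega⟩,
    lemA k ω (divDiff_sum ω k) u hu (Fin.last (k+1)),
    divDiff_sum ω (k+1) u hu, Finset.mul_sum, ← Finset.sum_sub_distrib]
  refine Finset.sum_congr rfl fun i _ => ?_
  ring


lemma newtonPoly_succ (ω : ℂ → ℂ) (k : ℕ) (β : Fin (k+1) → ℂ) (z : ℂ) :
    newtonPoly ω β z = newtonPoly ω (β ∘ Fin.castSucc) z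
      + divDiff k ω β * ∏ j : Fin k, (z - β j.castSucc) := by
  rw [newtonPoly, Fin.sum_univ_castSucc]
  rfl

lemma newton_key (ω : ℂ → ℂ) : ∀ (k : ℕ) (u : Fin (k+1) → ℂ), Function.Injective u →
    ω (u (Fin.last k)) = newtonPoly ω (u ∘ Fin.castSucc) (u (Fin.last k))
      + divDiff k ω u * ∏ j : Fin k, (u (Fin.last k) - u j.castSucc) := by
  intro k
  induction k with
  | zero =>
    intro u _
    simp [newtonPoly, divDiff]
  | succ k ih =>
    intro u hu
    set q : Fin (k+2) := ⟨k, by omega⟩ with hq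
    set v : Fin (k+1) → ℂ := u ∘ q.succAbove with hv
    have hvinj : Function.Injective v := hu.comp (Fin.succAbove_right_injective)
    have hvlast : v (Fin.last k) = u (Fin.last (k+1)) := by
      show u (q.succAbove (Fin.last k)) = _
      congr 1
      ext
      simp [Fin.succAbove, Fin.lt_def, hq]
    have hvcast : v ∘ Fin.castSucc = (u ∘ Fin.castSucc) ∘ Fin.castSucc := by
      funext i
      show u (q.succAbove i.castSucc) = _
      congr 1
      ext
      simp [Fin.succAbove, Fin.lt_def, hq, i.isLt]
    have hvj : ∀ j : Fin k, v j.castSucc = u j.castSucc.castSucc := fun j =>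
      congrFun hvcast j
    have hIH := ih v hvinj
    rw [hvlast, hvcast] at hIH
    simp only [hvj, hvlast] at hIH
    have hrec := rec2 k ω u hu
    rw [← hv] at hrec
    rw [newtonPoly_succ ω k (u ∘ Fin.castSucc) (u (Fin.last (k+1))),
      Fin.prod_univ_castSucc (fun j : Fin (k+1) => u (Fin.last (k+1)) - u j.castSucc)]
    have hlastq : (Fin.last k).castSucc = q := rfl
    rw [hlastq]
    set P := ∏ j : Fin k, (u (Fin.last (k+1)) - u j.castSucc.castSucc) with hP
    have hP2 : (∏ j : Fin k, (u (Fin.last (k+1)) - (u ∘ Fin.castSucc) j.castSucc)) = P := rfl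
    rw [hP2]
    linear_combination hIH + P * hrec

lemma newton_interp (ω : ℂ → ℂ) : ∀ (k : ℕ) (α : Fin k → ℂ), Function.Injective α →
    ∀ i, newtonPoly ω α (α i) = ω (α i) := by
  intro k
  induction k with
  | zero => intro α _ i; exact i.elim0
  | succ k ih =>
    intro α hα i
    rcases Fin.eq_castSucc_or_eq_last i with ⟨i', rfl⟩ | rfl
    · rw [newtonPoly_succ]
      have hz : (∏ j : Fin k, (α i'.castSucc - α j.castSucc)) = 0 :=
        Finset.prod_eq_zero (Finset.mem_univ i') (sub_self _)
      rw [hz, mul_zero, add_zero]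
      exact ih (α ∘ Fin.castSucc) (hα.comp (Fin.castSucc_injective k)) i'
    · rw [newtonPoly_succ]
      exact (newton_key ω k α hα).symm


lemma uniformX (p : ℂ → ℝ) (hp0 : ∀ z, 0 ≤ p z) (Λ : Set ℂ) (ω : ℂ → ℂ) :
    ∀ m : ℕ, (∀ j, j ≤ m → MemX p Λ j ω) → ∃ A > (0:ℝ), ∃ B > (0:ℝ), ∀ j, j ≤ m →
      ∀ z : Fin (j+1) → ℂ, (∀ i, z i ∈ Λ) → Function.Injective z →
        ‖divDiff j ω z‖ ≤ A * Real.exp (B * ∑ i, p (z i)) := by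
  intro m
  induction m with
  | zero =>
    intro h
    obtain ⟨A, hA, B, hB, hb⟩ := h 0 le_rfl
    exact ⟨A, hA, B, hB, fun j hj => by interval_cases j; exact hb⟩
  | succ m ih =>
    intro h
    obtain ⟨A, hA, B, hB, hb⟩ := ih (fun j hj => h j (hj.trans (Nat.le_succ m)))
    obtain ⟨A', hA', B', hB', hb'⟩ := h (m+1) le_rfl
    refine ⟨max A A', lt_max_of_lt_left hA, max B B', lt_max_of_lt_left hB, ?_⟩
    intro j hj z hzΛ hzinj
    have hsum : (0:ℝ) ≤ ∑ i, p (z i) := Finset.sum_nonneg fun i _ => hp0 _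
    rcases Nat.lt_succ_iff_lt_or_eq.mp (Nat.lt_succ_of_le hj) with h1 | rfl
    · calc ‖divDiff j ω z‖ ≤ A * Real.exp (B * ∑ i, p (z i)) :=
            hb j (Nat.lt_succ_iff.mp h1) z hzΛ hzinj
        _ ≤ max A A' * Real.exp (max B B' * ∑ i, p (z i)) := by
            apply mul_le_mul (le_max_left _ _) (Real.exp_le_exp.mpr ?_)
              (Real.exp_pos _).le (le_trans hA.le (le_max_left _ _))
            exact mul_le_mul_of_nonneg_right (le_max_left _ _) hsum
    · calc ‖divDiff (m+1) ω z‖ ≤ A' * Real.exp (B' * ∑ i, p (z i)) :=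
            hb' z hzΛ hzinj
        _ ≤ max A A' * Real.exp (max B B' * ∑ i, p (z i)) := by
            apply mul_le_mul (le_max_right _ _) (Real.exp_le_exp.mpr ?_)
              (Real.exp_pos _).le (le_trans hA.le (le_max_left _ _))
            exact mul_le_mul_of_nonneg_right (le_max_right _ _) hsum


theorem stmt16 (p : ℂ → ℝ) (hp : IsWeight p) (Λ : Set ℂ) (n : ℕ) (hn : 1 ≤ n)
    (ω : ℂ → ℂ) (hω : ∀ j, j ≤ n - 1 → MemX p Λ j ω) :
    ∃ A > (0:ℝ), ∃ B' > (0:ℝ), ∀ (l : ℂ) (k : ℕ), 1 ≤ k → k ≤ n →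
      ∀ α : Fin k → ℂ, Function.Injective α → (∀ i, α i ∈ Λ) →
        (∀ i, ‖α i - l‖ ≤ 1) →
        (∀ i, newtonPoly ω α (α i) = ω (α i)) ∧
        (∀ z, ‖newtonPoly ω α z‖ ≤ A * Real.exp (B' * (p z + p l))) := by 
  obtain ⟨hp0, ⟨K, hK, hKp⟩, D, hD, E, hE, hDE⟩ := hp
  obtain ⟨A, hA, B, hB, hbd⟩ := uniformX p hp0 Λ ω (n-1) hω
  have hn' : (1:ℝ) ≤ (n:ℝ) := by exact_mod_cast hn
  have hnpos : (0:ℝ) < (n:ℝ) := by linarith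
  set C0 : ℝ := A * Real.exp (B * n * E) * 3 ^ n with hC0
  have hC0pos : 0 < C0 := by positivity
  set Bs : ℝ := B * n * D + n / (2*K) with hBs
  have hBspos : 0 < Bs := by
    have h1 : 0 < B * n * D := mul_pos (mul_pos hB hnpos) hD
    have h2 : 0 ≤ (n:ℝ) / (2*K) := by positivity
    rw [hBs]; linarith
  refine ⟨(n:ℝ) * C0, by positivity, Bs, hBspos, ?_⟩
  intro l k hk1 hkn α hαinj hαΛ hαl
  refine ⟨newton_interp ω k α hαinj, ?_⟩
  intro z
  have habs : ∀ y : ℂ, ‖y‖ ≤ Real.exp (p y / (2*K)) := by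
    intro y
    have h1 : Real.log (1 + ‖y‖ ^ 2) ≤ p y / K := by
      rw [le_div_iff₀ hK]; nlinarith [hKp y]
    have h2 : 1 + ‖y‖ ^ 2 ≤ Real.exp (p y / K) :=
      (Real.log_le_iff_le_exp (by positivity)).mp h1
    have h3 : Real.exp (p y / (2*K)) ^ 2 = Real.exp (p y / K) := by
      rw [sq, ← Real.exp_add]
      congr 1
      field_simp
      ring
    nlinarith [Real.exp_pos (p y / (2*K)), norm_nonneg y]
  set M : ℝ := 3 * Real.exp ((p z + p l) / (2*K)) with hM
  have h1e : 1 ≤ Real.exp ((p z + p l)/(2*K)) := by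
    rw [show (1:ℝ) = Real.exp 0 from (Real.exp_zero).symm]
    apply Real.exp_le_exp.mpr
    apply div_nonneg (by linarith [hp0 z, hp0 l]) (by linarith)
  have hM1 : (1:ℝ) ≤ M := by rw [hM]; nlinarith
  have hfac : ∀ j : Fin k, ‖z - α j‖ ≤ M := by
    intro j
    have h1 : ‖z - α j‖ ≤ ‖z‖ + ‖α j‖ := by
      exact norm_sub_le z (α j)
    have h2 : ‖α j‖ ≤ ‖l‖ + 1 := by
      calc ‖α j‖ = ‖l + (α j - l)‖ := by ring_nf
        _ ≤ ‖l‖ + ‖α j - l‖ := norm_add_le _ _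
        _ ≤ ‖l‖ + 1 := by linarith [hαl j]
    have hz' := habs z
    have hl' := habs l
    have e1 : Real.exp (p z/(2*K)) ≤ Real.exp ((p z + p l)/(2*K)) := by
      apply Real.exp_le_exp.mpr
      gcongr <;> linarith [hp0 l, hp0 z]
    have e2 : Real.exp (p l/(2*K)) ≤ Real.exp ((p z + p l)/(2*K)) := by
      apply Real.exp_le_exp.mpr
      gcongr <;> linarith [hp0 l, hp0 z]
    rw [hM]; linarith
  calc ‖newtonPoly ω α z‖
      ≤ ∑ i : Fin k, ‖divDiff (i : ℕ) ω (fun j : Fin ((i : ℕ) + 1) => α (Fin.castLE i.isLt j)) *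
            ∏ j : Fin (i : ℕ), (z - α ⟨(j : ℕ), j.isLt.trans i.isLt⟩)‖ := by
        rw [newtonPoly]; exact norm_sum_le _ _
    _ ≤ ∑ _i : Fin k, C0 * Real.exp (Bs * (p z + p l)) := by
        refine Finset.sum_le_sum fun i _ => ?_
        rw [norm_mul]
        have hd : ‖divDiff (i:ℕ) ω (fun j => α (Fin.castLE i.isLt j))‖
            ≤ A * Real.exp (B * ((n:ℝ) * (D * p l + E))) := by
          have hi : (i:ℕ) ≤ n - 1 := by omega
          refine (hbd i hi _ (fun j => hαΛ _) (hαinj.comp (Fin.castLE_injective _))).trans ?_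
          apply mul_le_mul_of_nonneg_left _ hA.le
          apply Real.exp_le_exp.mpr
          apply mul_le_mul_of_nonneg_left _ hB.le
          have hDEl : 0 ≤ D * p l + E := by nlinarith [hp0 l]
          calc ∑ j : Fin ((i:ℕ)+1), p (α (Fin.castLE i.isLt j))
              ≤ ∑ _j : Fin ((i:ℕ)+1), (D * p l + E) :=
                Finset.sum_le_sum fun j _ => hDE _ l (hαl _)
            _ = (((i:ℕ)+1 : ℕ) : ℝ) * (D * p l + E) := by
                simp [Finset.sum_const, nsmul_eq_mul]; ring
            _ ≤ (n:ℝ) * (D * p l + E) := by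
                apply mul_le_mul_of_nonneg_right _ hDEl
                exact_mod_cast (by omega : (i:ℕ)+1 ≤ n)
        have hpr : ‖∏ j : Fin (i:ℕ), (z - α ⟨(j : ℕ), j.isLt.trans i.isLt⟩)‖
            ≤ 3^n * Real.exp ((n:ℝ) * ((p z + p l)/(2*K))) := by
          rw [norm_prod]
          calc ∏ j : Fin (i:ℕ), ‖z - α ⟨(j : ℕ), j.isLt.trans i.isLt⟩‖
              ≤ ∏ _j : Fin (i:ℕ), M :=
                Finset.prod_le_prod (fun _ _ => norm_nonneg _)
                  (fun j _ => hfac ⟨(j : ℕ), j.isLt.trans i.isLt⟩)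
            _ = M ^ (i:ℕ) := by simp
            _ ≤ M ^ n := pow_le_pow_right₀ hM1 (by omega)
            _ = 3^n * Real.exp ((n:ℝ) * ((p z + p l)/(2*K))) := by
                rw [hM, mul_pow, ← Real.exp_nat_mul]
        calc ‖divDiff (i:ℕ) ω (fun j => α (Fin.castLE i.isLt j))‖ *
              ‖∏ j : Fin (i:ℕ), (z - α ⟨(j : ℕ), j.isLt.trans i.isLt⟩)‖
            ≤ (A * Real.exp (B * ((n:ℝ) * (D * p l + E)))) *
              (3^n * Real.exp ((n:ℝ) * ((p z + p l)/(2*K)))) :=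
              mul_le_mul hd hpr (norm_nonneg _) (by positivity)
          _ = (A * 3^n) * Real.exp (B * ((n:ℝ) * (D * p l + E)) + (n:ℝ) * ((p z + p l)/(2*K))) := by
              rw [Real.exp_add]; ring
          _ ≤ (A * 3^n) * Real.exp (B * (n:ℝ) * E + Bs * (p z + p l)) := by
              apply mul_le_mul_of_nonneg_left _ (by positivity)
              apply Real.exp_le_exp.mpr
              have h1 : 0 ≤ B * (n:ℝ) * D * p z := by
                have := hp0 z
                positivity
              rw [hBs]
              have hK' : K ≠ 0 := ne_of_gt hK
              field_simp
              ring_nf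
              nlinarith [hp0 z, hK, mul_nonneg (mul_nonneg (mul_nonneg hB.le hD.le) hK.le) (hp0 z)]
          _ = C0 * Real.exp (Bs * (p z + p l)) := by
              rw [hC0, Real.exp_add]; ring
    _ = (k:ℝ) * (C0 * Real.exp (Bs * (p z + p l))) := by
        simp [Finset.sum_const, nsmul_eq_mul]
    _ ≤ (n:ℝ) * C0 * Real.exp (Bs * (p z + p l)) := by
        have hkn' : (k:ℝ) ≤ (n:ℝ) := by exact_mod_cast hkn
        rw [← mul_assoc]
        gcongr
end

section
/- If Λ is an A_φ-interpolating sequence in the unit disk, then Λ is weakly separated in the pseudo-hyperbolic sense: there exist C>0 and ε>0 such that the pseudo-hyperbolic disks D_H(λ, ε e^{−Cφ(λ)}) = {z ∈ 𝔻 : ρ(z,λ) < ε e^{−Cφ(λ)}}, λ ∈ Λ, are pairwise disjoint; consequently ∑_{λ∈Λ} (1−|λ|)² e^{−2Cφ(λ)} < ∞, and using (wd1), ∑_{λ∈Λ} e^{−C'φ(λ)} < ∞ for some C'>0. -/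
open Complex Metric Set

/-- Pseudo-hyperbolic distance on the unit disk. -/
noncomputable def rho (z w : ℂ) : ℝ := ‖(z - w) / (1 - (starRingEnd ℂ) w * z)‖

/-- A weight on the unit disk. -/
def IsWeightD (φ : ℂ → ℝ) : Prop :=
  (∀ z ∈ ball (0:ℂ) 1, 0 ≤ φ z) ∧
  (∃ K > 0, ∀ z ∈ ball (0:ℂ) 1, K * Real.log (1 / (1 - ‖z‖)) ≤ φ z) ∧
  (∃ D > 0, ∃ E > 0, ∀ z ∈ ball (0:ℂ) 1, ∀ w ∈ ball (0:ℂ) 1,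
    rho z w ≤ 1/2 → φ z ≤ D * φ w + E)

/-- `Λ` is interpolating for `A_φ` with uniform bounds. -/
def UnifInterpD (φ : ℂ → ℝ) (Λ : Set ℂ) : Prop :=
  ∀ A > 0, ∀ B > 0, ∃ A' > 0, ∃ B' > 0, ∀ ω : ℂ → ℂ,
    (∀ l ∈ Λ, ‖ω l‖ ≤ A * Real.exp (B * φ l)) →
    ∃ f : ℂ → ℂ, DifferentiableOn ℂ f (ball 0 1) ∧
      (∀ z ∈ ball (0:ℂ) 1, ‖f z‖ ≤ A' * Real.exp (B' * φ z)) ∧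
      ∀ l ∈ Λ, f l = ω l


lemma rho_le_div {z w : ℂ} (hw : ‖w‖ < 1) (hz : ‖z‖ ≤ 1) :
    rho z w ≤ ‖z - w‖ / (1 - ‖w‖) := by
  have h1 : 1 - ‖w‖ ≤ ‖1 - (starRingEnd ℂ) w * z‖ := by
    have h := norm_sub_norm_le (1 : ℂ) ((starRingEnd ℂ) w * z)
    simp only [norm_one, norm_mul, Complex.norm_conj] at h
    nlinarith [norm_nonneg w, norm_nonneg z]
  have h0 : 0 < 1 - ‖w‖ := by linarith
  rw [rho, norm_div]
  exact div_le_div_of_nonneg_left (norm_nonneg _) h0 h1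

lemma abs_sub_le_rho {z w : ℂ} (hw : ‖w‖ < 1) (hz : ‖z‖ ≤ 1)
    (hρ : rho z w ≤ 1/2) :
    ‖z - w‖ ≤ 4 * rho z w * (1 - ‖w‖) := by
  have hwn := norm_nonneg w
  have hzn := norm_nonneg z
  have ht : 1 - ‖w‖ ≤ ‖1 - (starRingEnd ℂ) w * z‖ := by
    have h := norm_sub_norm_le (1 : ℂ) ((starRingEnd ℂ) w * z)
    simp only [norm_one, norm_mul, Complex.norm_conj] at h
    nlinarith
  have ht0 : 0 < ‖1 - (starRingEnd ℂ) w * z‖ := by linarith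
  have heq : ‖z - w‖ = rho z w * ‖1 - (starRingEnd ℂ) w * z‖ := by
    rw [rho, norm_div, div_mul_cancel₀]
    exact ne_of_gt ht0
  have hρ0 : 0 ≤ rho z w := by rw [rho]; positivity
  have hub : ‖1 - (starRingEnd ℂ) w * z‖
      ≤ (1 - ‖w‖ ^ 2) + ‖z - w‖ := by
    have hid : (1 : ℂ) - (starRingEnd ℂ) w * z
        = ((1 - ‖w‖ ^ 2 : ℝ) : ℂ) + (starRingEnd ℂ) w * (w - z) := by
      have hc : ((‖w‖ ^ 2 : ℝ) : ℂ) = (starRingEnd ℂ) w * w := by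
        rw [Complex.sq_norm]
        exact Complex.normSq_eq_conj_mul_self
      rw [Complex.ofReal_sub, Complex.ofReal_one, hc]; ring
    have h1 : ‖(((1 - ‖w‖ ^ 2 : ℝ) : ℂ))‖ = 1 - ‖w‖ ^ 2 := by
      rw [Complex.norm_real, Real.norm_eq_abs]; exact abs_of_nonneg (by nlinarith)
    have h2 : ‖(starRingEnd ℂ) w * (w - z)‖ ≤ ‖z - w‖ := by
      rw [norm_mul, Complex.norm_conj, norm_sub_rev]
      nlinarith [norm_nonneg (z - w)]
    calc ‖1 - (starRingEnd ℂ) w * z‖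
        ≤ ‖(((1 - ‖w‖ ^ 2 : ℝ) : ℂ))‖
          + ‖(starRingEnd ℂ) w * (w - z)‖ := by rw [hid]; exact norm_add_le _ _
      _ ≤ (1 - ‖w‖ ^ 2) + ‖z - w‖ := by rw [h1]; linarith
  nlinarith [mul_le_mul_of_nonneg_left hub hρ0,
    mul_nonneg (mul_nonneg hρ0 (by linarith : (0:ℝ) ≤ 1 - ‖w‖))
      (by linarith : (0:ℝ) ≤ 1 - ‖w‖),
    norm_nonneg (z - w)]

lemma rho_lt_of_abs_sub {z w : ℂ} (hw : ‖w‖ < 1) {r : ℝ} (hr : r ≤ 1)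
    (h : ‖z - w‖ < r * (1 - ‖w‖)) :
    rho z w < r ∧ ‖z‖ < 1 := by
  have h0 : 0 < 1 - ‖w‖ := by linarith
  have hz : ‖z‖ < 1 := by
    have h1 : ‖z‖ - ‖w‖ ≤ ‖z - w‖ := by
      have := norm_sub_norm_le z w
      simpa using this
    nlinarith
  refine ⟨lt_of_le_of_lt (rho_le_div hw hz.le) ?_, hz⟩
  rw [div_lt_iff₀ h0]
  linarith

set_option maxHeartbeats 1000000 in
theorem stmt17 (φ : ℂ → ℝ) (hφ : IsWeightD φ) (Λ : Set ℂ) (hΛ : Λ ⊆ ball (0:ℂ) 1)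
    (hI : UnifInterpD φ Λ) :
    ∃ C > (0:ℝ), ∃ ε > (0:ℝ),
      (∀ l ∈ Λ, ∀ m ∈ Λ, l ≠ m →
        Disjoint {z ∈ ball (0:ℂ) 1 | rho z l < ε * Real.exp (-C * φ l)}
          {z ∈ ball (0:ℂ) 1 | rho z m < ε * Real.exp (-C * φ m)}) ∧
      Summable (fun l : Λ => (1 - ‖(l : ℂ)‖)^2 * Real.exp (-2 * C * φ l)) ∧
      ∃ C' > (0:ℝ), Summable (fun l : Λ => Real.exp (-C' * φ l)) := by
  obtain ⟨hφ0, ⟨K, hK, hKle⟩, D₀, hD₀, E₀, hE₀, hDE⟩ := hφ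
  obtain ⟨A', hA', B', hB', hint⟩ := hI 1 one_pos 1 one_pos
  have hφnn : ∀ l ∈ Λ, 0 ≤ φ l := fun l hl => hφ0 l (hΛ hl)
  have habs : ∀ l ∈ Λ, ‖l‖ < 1 := fun l hl => by
    simpa using mem_ball_zero_iff.mp (hΛ hl)
  set M : ℂ → ℝ := fun l => A' * Real.exp (B' * (D₀ * φ l + E₀)) with hM
  have hMpos : ∀ l, 0 < M l := fun l => mul_pos hA' (Real.exp_pos _)
  set C : ℝ := B' * D₀ with hCdef
  have hC : 0 < C := mul_pos hB' hD₀
  set ε : ℝ := min (1/2) (1 / (48 * A' * Real.exp (B' * E₀))) with hεdef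
  have hε : 0 < ε := lt_min (by norm_num) (by positivity)
  have hrpos : ∀ l : ℂ, 0 < ε * Real.exp (-C * φ l) := fun l => mul_pos hε (Real.exp_pos _)
  have hrhalf : ∀ l ∈ Λ, ε * Real.exp (-C * φ l) ≤ 1/2 := by
    intro l hl
    have h1 : Real.exp (-C * φ l) ≤ 1 := by
      rw [Real.exp_le_one_iff]
      nlinarith [hφnn l hl]
    have h2 : ε ≤ 1/2 := min_le_left _ _
    nlinarith [hε]
  have hr48 : ∀ l ∈ Λ, 48 * M l * (ε * Real.exp (-C * φ l)) ≤ 1 := by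
    intro l hl
    have hMr : M l * (ε * Real.exp (-C * φ l)) = A' * Real.exp (B' * E₀) * ε := by
      calc M l * (ε * Real.exp (-C * φ l))
          = A' * ε * (Real.exp (B' * (D₀ * φ l + E₀)) * Real.exp (-C * φ l)) := by
            simp only [hM]; ring
        _ = A' * Real.exp (B' * E₀) * ε := by
            rw [← Real.exp_add]
            have : B' * (D₀ * φ l + E₀) + -C * φ l = B' * E₀ := by rw [hCdef]; ring
            rw [this]; ring
    have hP : 0 < 48 * A' * Real.exp (B' * E₀) := by positivity
    have hεle : ε ≤ 1 / (48 * A' * Real.exp (B' * E₀)) := min_le_right _ _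
    have := (le_div_iff₀ hP).mp hεle
    nlinarith
  -- separation lemma
  have hsep : ∀ l ∈ Λ, ∀ m ∈ Λ, l ≠ m →
      (1 - ‖l‖) / (6 * M l) ≤ ‖l - m‖ := by
    intro l hl m hm hlm
    have hωb : ∀ x ∈ Λ, ‖((fun z => if z = l then (1:ℂ) else 0) x)‖
        ≤ 1 * Real.exp (1 * φ x) := by
      intro x hx
      by_cases h : x = l
      · subst h
        have hone : (fun z => if z = x then (1:ℂ) else 0) x = 1 := by simp
        rw [hone, norm_one, one_mul, one_mul]
        nlinarith [Real.add_one_le_exp (φ x), hφnn x hx]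
      · simp only [if_neg h, norm_zero]
        positivity
    obtain ⟨f, hfd, hfb, hfv⟩ := hint (fun z => if z = l then 1 else 0) hωb
    have hl1 : ‖l‖ < 1 := habs l hl
    set d : ℝ := (1 - ‖l‖) / 2 with hd
    have hdpos : 0 < d := by rw [hd]; linarith
    have hball : ball l d ⊆ ball (0:ℂ) 1 := by
      intro z hz
      rw [mem_ball_zero_iff]
      have hz' : ‖z - l‖ < d := by rw [← dist_eq_norm]; exact mem_ball.mp hz
      have h1 : ‖z‖ ≤ ‖z - l‖ + ‖l‖ := by
        calc ‖z‖ = ‖(z - l) + l‖ := by ring_nf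
          _ ≤ ‖z - l‖ + ‖l‖ := norm_add_le _ _
      have h2 : ‖l‖ = ‖l‖ := rfl
      rw [h2] at h1
      rw [hd] at hz'
      linarith
    have hfl : f l = 1 := by simpa using hfv l hl
    have hfm : f m = 0 := by
      have := hfv m hm
      simpa [if_neg (Ne.symm hlm)] using this
    have hrll : rho l l ≤ 1/2 := by
      rw [rho]; simp
    have hφll : φ l ≤ D₀ * φ l + E₀ := hDE l (hΛ hl) l (hΛ hl) hrll
    have hMl1 : 1 ≤ M l := by
      have h1 := hfb l (hΛ hl)
      rw [hfl, norm_one] at h1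
      calc (1:ℝ) ≤ A' * Real.exp (B' * φ l) := h1
        _ ≤ M l := by
            simp only [hM]
            have : B' * φ l ≤ B' * (D₀ * φ l + E₀) := by nlinarith
            exact mul_le_mul_of_nonneg_left (Real.exp_le_exp.mpr this) hA'.le
    have hmaps : MapsTo f (ball l d) (ball (f l) (3 * M l)) := by
      intro z hz
      have hz1 : z ∈ ball (0:ℂ) 1 := hball hz
      have hzabs : ‖z‖ < 1 := by
        simpa using mem_ball_zero_iff.mp hz1
      have hzd : ‖z - l‖ < d := by
        have := mem_ball.mp hz
        rwa [dist_eq_norm] at this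
      have hρ : rho z l ≤ 1/2 := by
        have h1 := rho_le_div hl1 hzabs.le
        have h3 : 0 < 1 - ‖l‖ := by linarith
        calc rho z l ≤ ‖z - l‖ / (1 - ‖l‖) := h1
          _ ≤ d / (1 - ‖l‖) := by
              gcongr
          _ = 1/2 := by rw [hd]; field_simp
      have hφz : φ z ≤ D₀ * φ l + E₀ := hDE z hz1 l (hΛ hl) hρ
      have hfz : ‖f z‖ ≤ M l := by
        calc ‖f z‖ ≤ A' * Real.exp (B' * φ z) := hfb z hz1
          _ ≤ M l := by
              simp only [hM]
              have : B' * φ z ≤ B' * (D₀ * φ l + E₀) := by nlinarith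
              exact mul_le_mul_of_nonneg_left (Real.exp_le_exp.mpr this) hA'.le
      rw [mem_ball, hfl]
      have hdist : dist (f z) 1 ≤ ‖f z‖ + 1 := by
        rw [dist_eq_norm]
        calc ‖f z - 1‖ ≤ ‖f z‖ + ‖(1:ℂ)‖ := norm_sub_le _ _
          _ = ‖f z‖ + 1 := by rw [norm_one]
      nlinarith [hMpos l]
    have hdistlm : dist m l = ‖l - m‖ := by
      rw [dist_eq_norm, norm_sub_rev]
    by_cases hmem : m ∈ ball l d
    · have hs := Complex.dist_le_div_mul_dist_of_mapsTo_ball (hfd.mono hball) (hmaps.mono_right ball_subset_closedBall) hmem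
      rw [hfm, hfl, hdistlm] at hs
      have hdist01 : dist (0:ℂ) 1 = 1 := by simp
      rw [hdist01] at hs
      rw [div_mul_eq_mul_div, le_div_iff₀ hdpos] at hs
      rw [div_le_iff₀ (by positivity)]
      rw [hd] at hs
      nlinarith [hMpos l, norm_nonneg (l - m)]
    · have hge : d ≤ dist m l := by
        rw [mem_ball, not_lt] at hmem
        exact hmem
      rw [hdistlm] at hge
      rw [div_le_iff₀ (by positivity)]
      rw [hd] at hge
      nlinarith [hMpos l, hMl1]
  -- disjointness
  have hdisj : ∀ l ∈ Λ, ∀ m ∈ Λ, l ≠ m →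
      Disjoint {z ∈ ball (0:ℂ) 1 | rho z l < ε * Real.exp (-C * φ l)}
        {z ∈ ball (0:ℂ) 1 | rho z m < ε * Real.exp (-C * φ m)} := by
    intro l hl m hm hlm
    rw [Set.disjoint_left]
    rintro z ⟨hz1, hz2⟩ ⟨_, hz3⟩
    have hzabs : ‖z‖ < 1 := by
      simpa using mem_ball_zero_iff.mp hz1
    have hal := habs l hl
    have ham := habs m hm
    have hbl := abs_sub_le_rho hal hzabs.le (hz2.le.trans (hrhalf l hl))
    have hbm := abs_sub_le_rho ham hzabs.le (hz3.le.trans (hrhalf m hm))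
    have h4l : ‖z - l‖ < 4 * (ε * Real.exp (-C * φ l)) * (1 - ‖l‖) := by
      nlinarith [mul_pos (sub_pos.mpr hz2) (sub_pos.mpr hal), hz2,
        mul_nonneg (by rw [rho]; positivity : (0:ℝ) ≤ rho z l) (sub_pos.mpr hal).le]
    have h4m : ‖z - m‖ < 4 * (ε * Real.exp (-C * φ m)) * (1 - ‖m‖) := by
      nlinarith [mul_pos (sub_pos.mpr hz3) (sub_pos.mpr ham), hz3,
        mul_nonneg (by rw [rho]; positivity : (0:ℝ) ≤ rho z m) (sub_pos.mpr ham).le]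
    have htri : ‖l - m‖ ≤ ‖z - l‖ + ‖z - m‖ := by
      calc ‖l - m‖ ≤ ‖l - z‖ + ‖z - m‖ :=
            norm_sub_le_norm_sub_add_norm_sub l z m
        _ = ‖z - l‖ + ‖z - m‖ := by rw [norm_sub_rev l z]
    have hlow1 := hsep l hl m hm hlm
    have hlow2 := hsep m hm l hl (Ne.symm hlm)
    have hlow2' : (1 - ‖m‖) / (6 * M m) ≤ ‖l - m‖ := by
      rwa [norm_sub_rev m l] at hlow2
    have ha1 : 1 - ‖l‖ ≤ ‖l - m‖ * (6 * M l) :=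
      (div_le_iff₀ (by positivity)).mp hlow1
    have ha2 : 1 - ‖m‖ ≤ ‖l - m‖ * (6 * M m) :=
      (div_le_iff₀ (by positivity)).mp hlow2'
    have h48l := hr48 l hl
    have h48m := hr48 m hm
    have ht0 : 0 ≤ ‖l - m‖ := norm_nonneg _
    set Rl := ε * Real.exp (-C * φ l) with hRldef
    set Rm := ε * Real.exp (-C * φ m) with hRmdef
    have hRl0 : (0:ℝ) < Rl := hrpos l
    have hRm0 : (0:ℝ) < Rm := hrpos m
    nlinarith [mul_le_mul_of_nonneg_left ha1 (by positivity : (0:ℝ) ≤ 4 * Rl),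
      mul_le_mul_of_nonneg_left ha2 (by positivity : (0:ℝ) ≤ 4 * Rm),
      mul_nonneg (by linarith : (0:ℝ) ≤ 1 - 48 * M l * Rl) ht0,
      mul_nonneg (by linarith : (0:ℝ) ≤ 1 - 48 * M m * Rm) ht0]
  -- Euclidean balls inside the hyperbolic disks
  have hsubset : ∀ l ∈ Λ, ball l (ε * Real.exp (-C * φ l) * (1 - ‖l‖)) ⊆
      {z ∈ ball (0:ℂ) 1 | rho z l < ε * Real.exp (-C * φ l)} := by
    intro l hl z hz
    have hz' : ‖z - l‖ < ε * Real.exp (-C * φ l) * (1 - ‖l‖) := by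
      have := mem_ball.mp hz
      rwa [dist_eq_norm] at this
    obtain ⟨h1, h2⟩ := rho_lt_of_abs_sub (habs l hl)
      ((hrhalf l hl).trans (by norm_num)) hz'
    exact ⟨mem_ball_zero_iff.mpr h2, h1⟩
  -- summability of the areas
  have hsum2 : Summable (fun l : Λ =>
      (1 - ‖(l : ℂ)‖)^2 * Real.exp (-2 * C * φ l)) := by
    have hterm : ∀ x : Λ, (ε * Real.exp (-C * φ (x:ℂ)) * (1 - ‖(x:ℂ)‖))^2
        = ε^2 * ((1 - ‖(x:ℂ)‖)^2 * Real.exp (-2 * C * φ (x:ℂ))) := by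
      intro x
      have hee : Real.exp (-2 * C * φ (x:ℂ))
          = Real.exp (-C * φ (x:ℂ)) * Real.exp (-C * φ (x:ℂ)) := by
        rw [← Real.exp_add]; congr 1; ring
      rw [hee]; ring
    apply summable_of_sum_le (c := 4 / ε^2)
    · intro x
      positivity
    · intro F
      have hpd : (↑F : Set Λ).PairwiseDisjoint
          (fun x : Λ => ball (x:ℂ) (ε * Real.exp (-C * φ (x:ℂ)) * (1 - ‖(x:ℂ)‖))) := by
        intro x _ y _ hxy
        have hne : (x:ℂ) ≠ (y:ℂ) := Subtype.coe_injective.ne hxy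
        exact ((hdisj x x.2 y y.2 hne).mono (hsubset x x.2) (hsubset y y.2))
      have hmeas := MeasureTheory.measure_biUnion_finset (μ := MeasureTheory.volume) hpd
        (fun x _ => measurableSet_ball)
      have hsub2 : (⋃ x ∈ F, ball (x:ℂ)
          (ε * Real.exp (-C * φ (x:ℂ)) * (1 - ‖(x:ℂ)‖))) ⊆ ball (0:ℂ) 1 := by
        intro z hz
        simp only [mem_iUnion] at hz
        obtain ⟨x, _, hx⟩ := hz
        exact (hsubset x x.2 hx).1
      have hle : ∑ x ∈ F, MeasureTheory.volume
            (ball (x:ℂ) (ε * Real.exp (-C * φ (x:ℂ)) * (1 - ‖(x:ℂ)‖)))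
          ≤ MeasureTheory.volume (ball (0:ℂ) 1) := by
        rw [← hmeas]
        exact MeasureTheory.measure_mono hsub2
      simp only [Complex.volume_ball] at hle
      rw [← Finset.sum_mul] at hle
      have hπ0 : (↑NNReal.pi : ENNReal) ≠ 0 :=
        ENNReal.coe_ne_zero.mpr NNReal.pi_ne_zero
      have hπtop : (↑NNReal.pi : ENNReal) ≠ ⊤ := ENNReal.coe_ne_top
      rw [ENNReal.mul_le_mul_iff_left hπ0 hπtop] at hle
      have hofr : ∀ x : Λ, (ENNReal.ofReal (ε * Real.exp (-C * φ (x:ℂ)) *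
          (1 - ‖(x:ℂ)‖))) ^ 2 = ENNReal.ofReal
          ((ε * Real.exp (-C * φ (x:ℂ)) * (1 - ‖(x:ℂ)‖))^2) := by
        intro x
        have hx1 := habs (x:ℂ) x.2
        rw [← ENNReal.ofReal_pow (mul_nonneg (by positivity) (by linarith))]
      simp only [hofr] at hle
      rw [← ENNReal.ofReal_sum_of_nonneg (fun x _ => by positivity)] at hle
      have h14 : (ENNReal.ofReal (1:ℝ)) ^ 2 ≤ ENNReal.ofReal 4 := by
        rw [← ENNReal.ofReal_pow (by norm_num)]
        exact ENNReal.ofReal_le_ofReal (by norm_num)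
      have hle2 : ENNReal.ofReal (∑ x ∈ F,
          (ε * Real.exp (-C * φ (x:ℂ)) * (1 - ‖(x:ℂ)‖))^2) ≤ ENNReal.ofReal 4 :=
        le_trans hle h14
      have hle3 : ∑ x ∈ F,
          (ε * Real.exp (-C * φ (x:ℂ)) * (1 - ‖(x:ℂ)‖))^2 ≤ 4 := by
        have := (ENNReal.ofReal_le_ofReal_iff (by norm_num : (0:ℝ) ≤ 4)).mp hle2
        exact this
      have heq2 : ∑ x ∈ F, (1 - ‖(x:ℂ)‖)^2 * Real.exp (-2 * C * φ (x:ℂ))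
          = (∑ x ∈ F, (ε * Real.exp (-C * φ (x:ℂ)) * (1 - ‖(x:ℂ)‖))^2) / ε^2 := by
        rw [Finset.sum_div]
        apply Finset.sum_congr rfl
        intro x _
        rw [hterm x]
        field_simp
      rw [heq2]
      apply div_le_div_of_nonneg_right hle3 (by positivity) |>.trans_eq rfl
  refine ⟨C, hC, ε, hε, hdisj, hsum2, 2 * C + 2 / K, by positivity, ?_⟩
  apply Summable.of_nonneg_of_le (fun x => (Real.exp_pos _).le) ?_ hsum2
  intro x
  have ha : ‖(x:ℂ)‖ < 1 := habs (x:ℂ) x.2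
  have h0 : (0:ℝ) < 1 - ‖(x:ℂ)‖ := by linarith
  have hlog := hKle (x:ℂ) (hΛ x.2)
  rw [one_div, Real.log_inv] at hlog
  have hexp1 : Real.exp (-(2/K) * φ (x:ℂ)) ≤ (1 - ‖(x:ℂ)‖)^2 := by
    have h2 : -(2/K) * φ (x:ℂ) ≤ 2 * Real.log (1 - ‖(x:ℂ)‖) := by
      have hKpos : (0:ℝ) < 2/K := by positivity
      have h3 := mul_le_mul_of_nonneg_left hlog hKpos.le
      have h4 : 2/K * (K * -Real.log (1 - ‖(x:ℂ)‖))
          = -(2 * Real.log (1 - ‖(x:ℂ)‖)) := by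
        field_simp
      rw [h4] at h3
      linarith
    calc Real.exp (-(2/K) * φ (x:ℂ))
        ≤ Real.exp (2 * Real.log (1 - ‖(x:ℂ)‖)) := Real.exp_le_exp.mpr h2
      _ = (1 - ‖(x:ℂ)‖)^2 := by
          rw [show (2:ℝ) * Real.log (1 - ‖(x:ℂ)‖)
              = Real.log (1 - ‖(x:ℂ)‖) + Real.log (1 - ‖(x:ℂ)‖) by ring,
            Real.exp_add, Real.exp_log h0]
          ring
  calc Real.exp (-(2 * C + 2 / K) * φ (x:ℂ))
      = Real.exp (-(2/K) * φ (x:ℂ)) * Real.exp (-2 * C * φ (x:ℂ)) := by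
        rw [← Real.exp_add]; congr 1; ring
    _ ≤ (1 - ‖(x:ℂ)‖)^2 * Real.exp (-2 * C * φ (x:ℂ)) :=
        mul_le_mul_of_nonneg_right hexp1 (Real.exp_pos _).le
end

section
/- For a discrete sequence Λ ⊂ ℂ, if X⁰_p(Λ) = X¹_p(Λ) then there exist ε>0 and C>0 such that each disk D(λ, ε e^{−Cp(λ)}), λ ∈ Λ, contains at most one point of Λ, i.e., Λ is weakly separated. -/
open Complex Metric Set

theorem stmt18 (p : ℂ → ℝ) (hp : IsWeight p) (Λ : Set ℂ) (hΛd : DiscreteSet Λ)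
    (h : ∀ ω : ℂ → ℂ, MemX p Λ 0 ω ↔ MemX p Λ 1 ω) :
    ∃ ε > 0, ∃ C > 0, ∀ l ∈ Λ,
      (Λ ∩ ball l (ε * Real.exp (-C * p l))).encard ≤ 1 := by
  classical
  obtain ⟨hp0, -, D, hD, E, hE, hDE⟩ := hp
  by_contra hcon
  push_neg at hcon
  -- Step 1: for each n, find a close pair in Λ
  have key : ∀ n : ℕ, ∃ x y : ℂ, x ∈ Λ ∧ y ∈ Λ ∧ x ≠ y ∧
      dist x y < Real.exp (-((n:ℝ)+1)*(1 + p x)) := by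
    intro n
    set m : ℝ := (n:ℝ)+1 with hm
    have hm1 : 1 ≤ m := by have : (0:ℝ) ≤ (n:ℝ) := Nat.cast_nonneg n; linarith
    have hε : (0:ℝ) < Real.exp (-m*(1+E))/2 := by positivity
    have hC : (0:ℝ) < m*D := by positivity
    obtain ⟨l, hl, hcard⟩ := hcon _ hε _ hC
    rw [Set.one_lt_encard_iff] at hcard
    obtain ⟨x, y, ⟨hxΛ, hxb⟩, ⟨hyΛ, hyb⟩, hxy⟩ := hcard
    refine ⟨x, y, hxΛ, hyΛ, hxy, ?_⟩
    set r : ℝ := Real.exp (-m*(1+E))/2 * Real.exp (-(m*D) * p l) with hr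
    rw [mem_ball] at hxb hyb
    have hrle : r ≤ 1/2 := by
      have h1 : Real.exp (-m*(1+E)) ≤ 1 := Real.exp_le_one_iff.2 (by nlinarith)
      have h2 : Real.exp (-(m*D) * p l) ≤ 1 := Real.exp_le_one_iff.2 (by nlinarith [hp0 l])
      calc r = Real.exp (-m*(1+E))/2 * Real.exp (-(m*D) * p l) := hr
        _ ≤ 1/2 * 1 := by gcongr
        _ = 1/2 := by ring
    have hpx : p x ≤ D * p l + E := by
      apply hDE
      have hxl : ‖x - l‖ = dist x l := (Complex.dist_eq x l).symm
      rw [hxl]; linarith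
    have h2r : 2 * r ≤ Real.exp (-m*(1 + p x)) := by
      have hlog : -(m*D) * p l ≤ -m * p x + m * E := by nlinarith
      calc 2 * r = Real.exp (-m*(1+E)) * Real.exp (-(m*D) * p l) := by rw [hr]; ring
        _ ≤ Real.exp (-m*(1+E)) * Real.exp (-m * p x + m * E) := by
              gcongr
        _ = Real.exp (-m*(1 + p x)) := by rw [← Real.exp_add]; ring_nf
    calc dist x y ≤ dist x l + dist l y := dist_triangle x l y
      _ < r + r := by rw [dist_comm l y]; linarith
      _ = 2 * r := by ring
      _ ≤ _ := h2r
  choose a b haΛ hbΛ hab hd using key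
  have hdist1 : ∀ n : ℕ, dist (a n) (b n) < Real.exp (-((n:ℝ)+1)) := by
    intro n
    refine (hd n).trans_le (Real.exp_le_exp.2 ?_)
    have hx : (0:ℝ) ≤ (n:ℝ) := Nat.cast_nonneg n
    nlinarith [hp0 (a n), hx]
  -- Step 2: each point occurs in only finitely many pairs
  have hTfin : ∀ c : ℂ, {n : ℕ | a n = c ∨ b n = c}.Finite := by
    intro c
    by_contra hinf
    rw [← Set.not_infinite, not_not] at hinf
    apply hΛd c
    rw [accPt_iff_nhds]
    intro U hU
    obtain ⟨δ, hδ, hδU⟩ := Metric.mem_nhds_iff.1 hU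
    obtain ⟨N, hN⟩ := exists_nat_gt (Real.log δ⁻¹)
    have hexp : Real.exp (-((N:ℝ)+1)) < δ := by
      rw [← Real.exp_log hδ]
      apply Real.exp_lt_exp.2
      have hlog : Real.log δ = -Real.log δ⁻¹ := by rw [Real.log_inv]; ring
      rw [hlog]; linarith
    obtain ⟨n, hn, hNn⟩ := hinf.exists_gt N
    have hmono : Real.exp (-((n:ℝ)+1)) ≤ Real.exp (-((N:ℝ)+1)) := by
      apply Real.exp_le_exp.2
      have : (N:ℝ) ≤ (n:ℝ) := by exact_mod_cast hNn.le
      linarith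
    have hsmall : dist (a n) (b n) < δ := lt_of_lt_of_le (hdist1 n) (hmono.trans hexp.le)
    rcases hn with hn | hn
    · refine ⟨b n, ⟨hδU ?_, hbΛ n⟩, ?_⟩
      · rw [mem_ball, ← hn, dist_comm]; exact hsmall
      · rw [← hn]; exact (hab n).symm
    · refine ⟨a n, ⟨hδU ?_, haΛ n⟩, ?_⟩
      · rw [mem_ball, ← hn]; exact hsmall
      · rw [← hn]; exact hab n
  -- Step 3: extract a subsequence with fresh points
  set W : ℕ → Set ℕ := fun n =>
    ⋃ j ∈ Set.Iic n, ({m | a m = a j ∨ b m = a j} ∪ {m | a m = b j ∨ b m = b j}) with hW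
  have hWfin : ∀ n, (W n).Finite := by
    intro n
    exact (Set.finite_Iic n).biUnion (fun j _ => (hTfin (a j)).union (hTfin (b j)))
  have hWmono : ∀ {n n' : ℕ}, n ≤ n' → W n ⊆ W n' := by
    intro n n' hnn
    apply Set.biUnion_subset_biUnion_left
    exact Set.Iic_subset_Iic.2 hnn
  have hh : ∀ n : ℕ, ∃ N : ℕ, n < N ∧ ∀ m ∈ W n, m < N := by
    intro n
    obtain ⟨N0, hN0⟩ := (hWfin n).bddAbove
    exact ⟨max n N0 + 1, by omega, fun m hm => by
      have := hN0 hm; omega⟩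
  choose g hg1 hg2 using hh
  set f : ℕ → ℕ := fun k => Nat.rec 0 (fun _ ih => g ih) k with hf
  have hfs : ∀ k, f (k+1) = g (f k) := fun k => rfl
  have hfmono : StrictMono f := by
    apply strictMono_nat_of_lt_succ
    intro k
    rw [hfs]
    exact hg1 (f k)
  have hfresh : ∀ j k : ℕ, j < k → f k ∉ W (f j) := by
    intro j k hjk hmem
    obtain ⟨k', rfl⟩ : ∃ k', k = k' + 1 := ⟨k - 1, by omega⟩
    have hjk' : f j ≤ f k' := hfmono.monotone (by omega)
    have h2 := hg2 (f k') (f (k'+1)) (hWmono hjk' hmem)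
    exact absurd h2 (lt_irrefl _)
  have hself : ∀ j m : ℕ, (a m = a j ∨ b m = a j) → m ∈ W j := by
    intro j m hm
    refine Set.mem_biUnion (Set.mem_Iic.2 le_rfl) (Or.inl hm)
  have hself' : ∀ j m : ℕ, (a m = b j ∨ b m = b j) → m ∈ W j := by
    intro j m hm
    refine Set.mem_biUnion (Set.mem_Iic.2 le_rfl) (Or.inr hm)
  -- Step 4: the indicator function
  set ω : ℂ → ℂ := fun z => if ∃ k, a (f k) = z then (1:ℂ) else 0 with hω
  have hωa : ∀ k, ω (a (f k)) = 1 := fun k => if_pos ⟨k, rfl⟩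
  have hωb : ∀ k, ω (b (f k)) = 0 := by
    intro k
    apply if_neg
    rintro ⟨j, hj⟩
    rcases lt_trichotomy j k with hjk | rfl | hkj
    · exact hfresh j k hjk (hself (f j) (f k) (Or.inr hj.symm))
    · exact hab _ hj
    · exact hfresh k j hkj (hself' (f k) (f j) (Or.inl hj))
  have hω0 : MemX p Λ 0 ω := by
    refine ⟨1, one_pos, 1, one_pos, fun z _ _ => ?_⟩
    have h1 : ‖divDiff 0 ω z‖ ≤ 1 := by
      show ‖ω (z 0)‖ ≤ 1
      simp only [hω]
      split <;> simp
    have h2 : (1:ℝ) ≤ Real.exp (1 * ∑ i, p (z i)) := by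
      apply Real.one_le_exp
      rw [Fin.sum_univ_one]
      linarith [hp0 (z 0)]
    linarith
  obtain ⟨A, hA, B, hB, hbd⟩ := (h ω).1 hω0
  -- Step 5: contradiction
  set k0 : ℕ := ⌈max (B*(1+D)) (Real.log A + B*E)⌉₊ with hk0
  set n : ℕ := f k0 with hn
  set m : ℝ := (n:ℝ) + 1 with hm
  have hk0le : (k0:ℝ) ≤ m := by
    have h1 : k0 ≤ n := hfmono.le_apply
    have : (k0:ℝ) ≤ (n:ℝ) := by exact_mod_cast h1
    linarith
  have hm1 : B*(1+D) ≤ m := le_trans ((le_max_left _ _).trans (Nat.le_ceil _)) hk0le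
  have hm2 : Real.log A + B*E ≤ m := le_trans ((le_max_right _ _).trans (Nat.le_ceil _)) hk0le
  set z : Fin 2 → ℂ := ![b n, a n] with hz
  have hzΛ : ∀ i, z i ∈ Λ := by
    intro i
    fin_cases i
    · exact hbΛ n
    · exact haΛ n
  have hzinj : Function.Injective z := by
    have hne : b n ≠ a n := (hab n).symm
    intro i j hij
    fin_cases i <;> fin_cases j <;>
      simp only [hz, Matrix.cons_val_zero, Matrix.cons_val_one, Matrix.head_cons] at hij <;>
      first
        | rfl
        | exact absurd hij hne
        | exact absurd hij.symm hne
  have hdd : divDiff 1 ω z = 1 / (a n - b n) := by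
    show (divDiff 0 ω (fun i => z i.succ) - divDiff 0 ω (fun i => z i.castSucc)) /
        (z (Fin.last 1) - z 0) = 1 / (a n - b n)
    show (ω (z 1) - ω (z 0)) / (z (Fin.last 1) - z 0) = 1 / (a n - b n)
    have hz0 : z 0 = b n := rfl
    have hz1 : z 1 = a n := rfl
    have hzl : z (Fin.last 1) = a n := rfl
    rw [hz0, hz1, hzl, hωa k0, hωb k0, sub_zero]
  have hbd2 := hbd z hzΛ hzinj
  rw [hdd] at hbd2
  have ht : (0:ℝ) < dist (a n) (b n) := dist_pos.2 (hab n)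
  have habs : ‖1 / (a n - b n)‖ = (dist (a n) (b n))⁻¹ := by
    rw [norm_div, norm_one, Complex.dist_eq, one_div]
  rw [habs] at hbd2
  have hsum : ∑ i, p (z i) = p (b n) + p (a n) := by
    rw [Fin.sum_univ_two]
    rfl
  rw [hsum] at hbd2
  have hpb : p (b n) ≤ D * p (a n) + E := by
    apply hDE
    have h1 : ‖b n - a n‖ = dist (a n) (b n) := by
      rw [← Complex.dist_eq, dist_comm]
    rw [h1]
    have hx : (0:ℝ) ≤ (n:ℝ) := Nat.cast_nonneg n
    have h2 : Real.exp (-((n:ℝ)+1)) ≤ 1 := Real.exp_le_one_iff.2 (by linarith)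
    linarith [hdist1 n]
  have hlow : Real.exp (m * (1 + p (a n))) < (dist (a n) (b n))⁻¹ := by
    have h1 : dist (a n) (b n) < (Real.exp (m * (1 + p (a n))))⁻¹ := by
      rw [← Real.exp_neg]
      have : -(m * (1 + p (a n))) = -m * (1 + p (a n)) := by ring
      rw [this]
      exact hd n
    calc Real.exp (m * (1 + p (a n))) = ((Real.exp (m * (1 + p (a n))))⁻¹)⁻¹ := by
          rw [inv_inv]
      _ < (dist (a n) (b n))⁻¹ := by
          exact inv_strictAnti₀ ht h1
  have hhigh : A * Real.exp (B * (p (b n) + p (a n))) ≤ Real.exp (m * (1 + p (a n))) := by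
    have hA' : A = Real.exp (Real.log A) := (Real.exp_log hA).symm
    rw [hA', ← Real.exp_add]
    apply Real.exp_le_exp.2
    have hpa := hp0 (a n)
    nlinarith [mul_le_mul_of_nonneg_left hpb hB.le, mul_le_mul_of_nonneg_right hm1 hpa]
  linarith
end
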